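/- Let c > 0, T_M > 0 and let f ∈ C²(ℝ_+) with 0 ≤ f ≤ T_M, f(0) = T_M, solve f''(y) − c·f'(y) − f(y)⁴ + ∫_0^∞ E(y−η)·f(η)⁴ dη = 0 on (0,∞). If f(y₀) = T_M for some y₀ > 0, then a contradiction arises: at y₀ one has f''(y₀) − cf'(y₀) − T_M⁴ + ∫_0^∞ E(η−y₀)f⁴(η)dη ≤ T_M⁴·(−1 + ∫_{−y₀}^∞ E(η)dη) < 0. Hence f(y) < T_M for all y > 0. -/

import Mathlib

open MeasureTheory

/-- The normalized exponential integral kernel E(x) = (1/2)·∫_{|x|}^∞ e^{-t}/t dt. -/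
noncomputable def Ek (x : ℝ) : ℝ := (1 / 2) * ∫ t in Set.Ioi |x|, Real.exp (-t) / t

section EkLemmas
open Real Set Filter

lemma kern_integrableOn {a : ℝ} (ha : 0 < a) :
    IntegrableOn (fun t => Real.exp (-t) / t) (Set.Ioi a) := by
  have hint : IntegrableOn (fun t => Real.exp (-t) / a) (Set.Ioi a) := by
    simpa [neg_one_mul, div_eq_mul_inv, IntegrableOn] using
      (exp_neg_integrableOn_Ioi a one_pos).mul_const a⁻¹
  refine Integrable.mono' hint ?_ ?_
  · exact ContinuousOn.aestronglyMeasurable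
      ((continuous_neg.rexp.continuousOn).div continuousOn_id
        (fun t ht => ne_of_gt (ha.trans ht))) measurableSet_Ioi
  · filter_upwards [ae_restrict_mem measurableSet_Ioi] with t ht
    have htpos : 0 < t := ha.trans ht
    rw [Real.norm_eq_abs, abs_of_nonneg (div_nonneg (Real.exp_pos _).le htpos.le)]
    gcongr
    exact ht.le

lemma kern_nonneg_ae (a : ℝ) (ha : 0 ≤ a) :
    0 ≤ᶠ[ae (volume.restrict (Set.Ioi a))] fun t => Real.exp (-t) / t := by
  filter_upwards [ae_restrict_mem measurableSet_Ioi] with t ht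
  exact div_nonneg (Real.exp_pos _).le (ha.trans_lt ht).le

lemma ek_nonneg (x : ℝ) : 0 ≤ Ek x := by
  apply mul_nonneg (by norm_num)
  apply setIntegral_nonneg measurableSet_Ioi
  intro t ht
  exact div_nonneg (Real.exp_pos _).le ((abs_nonneg x).trans_lt ht).le

lemma ek_pos {x : ℝ} (hx : x ≠ 0) : 0 < Ek x := by
  have ha : 0 < |x| := abs_pos.mpr hx
  apply mul_pos (by norm_num)
  rw [setIntegral_pos_iff_support_of_nonneg_ae (kern_nonneg_ae _ ha.le) (kern_integrableOn ha)]
  refine lt_of_lt_of_le ?_ (measure_mono (fun t (ht : t ∈ Set.Ioi |x|) =>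
    ⟨ne_of_gt (div_pos (Real.exp_pos _) (ha.trans ht)), ht⟩))
  simp [Real.volume_Ioi]

noncomputable def Fk : ℝ → ENNReal := fun x => ∫⁻ t in Set.Ioi |x|, ENNReal.ofReal (Real.exp (-t) / t)

noncomputable def Gk : ℝ × ℝ → ENNReal := fun p =>
  Set.indicator {p : ℝ × ℝ | |p.1| < p.2} (fun p => ENNReal.ofReal (Real.exp (-p.2) / p.2)) p

lemma gk_meas : Measurable Gk := by
  apply Measurable.indicator
  · exact (ENNReal.measurable_ofReal.comp ((measurable_neg.comp measurable_snd).exp.div measurable_snd))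
  · exact measurableSet_lt (measurable_fst.abs) measurable_snd

lemma fk_eq (x : ℝ) : Fk x = ∫⁻ t, Gk (x, t) := by
  have h1 : ∀ t, Gk (x, t) =
      Set.indicator (Set.Ioi |x|) (fun t => ENNReal.ofReal (Real.exp (-t) / t)) t := by
    intro t
    by_cases h : |x| < t
    · rw [Gk, Set.indicator_of_mem (show (x, t) ∈ {p : ℝ × ℝ | |p.1| < p.2} from h),
        Set.indicator_of_mem (show t ∈ Set.Ioi |x| from h)]
    · rw [Gk, Set.indicator_of_notMem (show (x, t) ∉ {p : ℝ × ℝ | |p.1| < p.2} from h),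
        Set.indicator_of_notMem (show t ∉ Set.Ioi |x| from h)]
  simp only [h1]
  rw [lintegral_indicator measurableSet_Ioi]
  rfl

lemma fk_meas : Measurable Fk := by
  simp only [funext fk_eq]
  exact gk_meas.lintegral_prod_right' 

lemma fk_lintegral : ∫⁻ x, Fk x = 2 := by
  have swap : ∫⁻ x, Fk x = ∫⁻ t, ∫⁻ x, Gk (x, t) := by
    simp only [funext fk_eq]
    exact lintegral_lintegral_swap gk_meas.aemeasurable
  rw [swap]
  have inner : ∀ t : ℝ, (∫⁻ x, Gk (x, t)) =
      ENNReal.ofReal (Real.exp (-t) / t) * ENNReal.ofReal (2 * t) := by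
    intro t
    have hset : (fun x => Gk (x, t)) =
        Set.indicator (Set.Ioo (-t) t) (fun _ => ENNReal.ofReal (Real.exp (-t) / t)) := by
      ext x
      by_cases h : |x| < t
      · rw [Gk, Set.indicator_of_mem (show (x, t) ∈ {p : ℝ × ℝ | |p.1| < p.2} from h),
          Set.indicator_of_mem (show x ∈ Set.Ioo (-t) t from abs_lt.mp h)]
      · rw [Gk, Set.indicator_of_notMem (show (x, t) ∉ {p : ℝ × ℝ | |p.1| < p.2} from h),
          Set.indicator_of_notMem (show x ∉ Set.Ioo (-t) t from fun hh => h (abs_lt.mpr hh))]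
    rw [hset, lintegral_indicator_const measurableSet_Ioo, Real.volume_Ioo]
    congr 1
    ring_nf
  simp only [inner]
  have eqind : (fun t : ℝ => ENNReal.ofReal (Real.exp (-t) / t) * ENNReal.ofReal (2 * t)) =
      Set.indicator (Set.Ioi 0) (fun t => ENNReal.ofReal (2 * Real.exp (-t))) := by
    ext t
    by_cases ht : 0 < t
    · rw [Set.indicator_of_mem (by exact ht), ← ENNReal.ofReal_mul
        (div_nonneg (Real.exp_pos _).le ht.le)]
      congr 1
      field_simp
    · rw [Set.indicator_of_notMem (by exact ht)]
      push_neg at ht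
      have h0 : ENNReal.ofReal (2 * t) = 0 := ENNReal.ofReal_eq_zero.mpr (by linarith)
      rw [h0, mul_zero]
  rw [eqind, lintegral_indicator measurableSet_Ioi]
  have hint : IntegrableOn (fun t => 2 * Real.exp (-t)) (Set.Ioi 0) := by
    simpa [neg_one_mul, IntegrableOn] using (exp_neg_integrableOn_Ioi 0 one_pos).const_mul 2
  rw [← ofReal_integral_eq_lintegral_ofReal hint]
  · rw [MeasureTheory.integral_const_mul, integral_exp_neg_Ioi_zero]
    norm_num
  · filter_upwards [ae_restrict_mem measurableSet_Ioi] with t _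
    positivity

lemma ek_eq_fk {x : ℝ} (hx : x ≠ 0) : Ek x = (1 / 2) * (Fk x).toReal := by
  have ha : 0 < |x| := abs_pos.mpr hx
  rw [Ek, integral_eq_lintegral_of_nonneg_ae (kern_nonneg_ae _ ha.le)
    (kern_integrableOn ha).aestronglyMeasurable]
  rfl

lemma fk_ne_top {x : ℝ} (hx : x ≠ 0) : Fk x ≠ ⊤ :=
  ne_of_lt (Integrable.lintegral_lt_top (kern_integrableOn (abs_pos.mpr hx)))

lemma ek_ae_eq : Ek =ᶠ[ae volume] fun x => (1 / 2) * (Fk x).toReal := by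
  have h0 : ({0} : Set ℝ)ᶜ ∈ ae volume := by
    rw [mem_ae_iff, compl_compl]
    exact Real.volume_singleton
  filter_upwards [h0] with x hx
  exact ek_eq_fk hx

lemma ofReal_ek_ae :
    (fun x => ENNReal.ofReal (Ek x)) =ᶠ[ae volume] fun x => ENNReal.ofReal (1 / 2) * Fk x := by
  have h0 : ({0} : Set ℝ)ᶜ ∈ ae volume := by
    rw [mem_ae_iff, compl_compl]
    exact Real.volume_singleton
  filter_upwards [h0] with x hx
  rw [ek_eq_fk hx, ENNReal.ofReal_mul (by norm_num), ENNReal.ofReal_toReal (fk_ne_top hx)]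

lemma ek_aesm : AEStronglyMeasurable Ek volume :=
  ((fk_meas.ennreal_toReal).const_mul (1 / 2)).aestronglyMeasurable.congr ek_ae_eq.symm

lemma lintegral_ofReal_ek : ∫⁻ x, ENNReal.ofReal (Ek x) = 1 := by
  rw [lintegral_congr_ae ofReal_ek_ae, lintegral_const_mul _ fk_meas, fk_lintegral]
  rw [show ((2 : ENNReal)) = ENNReal.ofReal 2 by simp]
  rw [← ENNReal.ofReal_mul (by norm_num)]
  norm_num

lemma ek_integrable : Integrable Ek := by
  refine ⟨ek_aesm, ?_⟩
  rw [hasFiniteIntegral_iff_ofReal (Eventually.of_forall ek_nonneg), lintegral_ofReal_ek]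
  exact ENNReal.one_lt_top

lemma ek_integral : ∫ x, Ek x = 1 := by
  rw [integral_eq_lintegral_of_nonneg_ae (Eventually.of_forall ek_nonneg) ek_aesm,
    lintegral_ofReal_ek]
  rfl

lemma ek_comp_integrable (y : ℝ) : Integrable (fun η => Ek (y - η)) :=
  ek_integrable.comp_sub_left y

lemma ek_comp_integral (y : ℝ) : ∫ η, Ek (y - η) = 1 := by
  rw [integral_sub_left_eq_self Ek volume y, ek_integral]

lemma ek_shift_lt_one {y : ℝ} (hy : 0 < y) : ∫ η in Set.Ioi (0:ℝ), Ek (y - η) < 1 := by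
  have hsplit := integral_add_compl (measurableSet_Ioi (a := (0:ℝ)))
    (ek_comp_integrable y)
  rw [compl_Ioi, ek_comp_integral y] at hsplit
  have hpos : 0 < ∫ η in Set.Iic (0:ℝ), Ek (y - η) := by
    rw [setIntegral_pos_iff_support_of_nonneg_ae]
    · refine lt_of_lt_of_le ?_ (measure_mono (fun η (hη : η ∈ Set.Iic (0:ℝ)) =>
        ⟨ne_of_gt (ek_pos (by simp only [Set.mem_Iic] at hη; intro h; nlinarith [hη, hy])), hη⟩))
      simp [Real.volume_Iic]
    · exact Eventually.of_forall (fun η => ek_nonneg _)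
    · exact (ek_comp_integrable y).integrableOn
  linarith

end EkLemmas

open Real Set Filter in
/-- a bounded solution of the non-local equation with f(0) = T_M stays
strictly below T_M on (0,∞). -/
theorem stmt12 (c T_M : ℝ) (hc : 0 < c) (hTM : 0 < T_M) (f : ℝ → ℝ)
    (hf : ContDiffOn ℝ 2 f (Set.Ici 0))
    (hb : ∀ y ∈ Set.Ici (0 : ℝ), 0 ≤ f y ∧ f y ≤ T_M)
    (hf0 : f 0 = T_M)
    (heq : ∀ y ∈ Set.Ioi (0 : ℝ),
      deriv (deriv f) y - c * deriv f y - (f y) ^ 4 +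
        (∫ η in Set.Ioi (0 : ℝ), Ek (y - η) * (f η) ^ 4) = 0) :
    ∀ y ∈ Set.Ioi (0 : ℝ), f y < T_M := by
  by_contra hcon
  push_neg at hcon
  obtain ⟨y₀, hy₀, hge⟩ := hcon
  simp only [Set.mem_Ioi] at hy₀
  have hfy₀ : f y₀ = T_M := le_antisymm ((hb y₀ (le_of_lt hy₀)).2) hge
  -- smoothness structure on Ioi 0
  have hf2 : ContDiffOn ℝ 2 f (Set.Ioi 0) := hf.mono Set.Ioi_subset_Ici_self
  rw [show (2 : WithTop ℕ∞) = 1 + 1 by norm_num] at hf2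
  rw [contDiffOn_succ_iff_deriv_of_isOpen isOpen_Ioi] at hf2
  obtain ⟨hfdiff, -, hfd1⟩ := hf2
  have hgdiffOn : DifferentiableOn ℝ (deriv f) (Set.Ioi 0) := hfd1.differentiableOn one_ne_zero
  -- local max
  have hmax : IsLocalMax f y₀ := by
    filter_upwards [isOpen_Ioi.mem_nhds hy₀] with z hz
    rw [hfy₀]
    exact (hb z (Set.mem_Ici.mpr (le_of_lt (Set.mem_Ioi.mp hz)))).2
  have hderiv0 : deriv f y₀ = 0 := hmax.deriv_eq_zero
  -- second derivative nonpositive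
  have hsecond : deriv (deriv f) y₀ ≤ 0 := by
    by_contra hA
    push_neg at hA
    have hgdiff : DifferentiableAt ℝ (deriv f) y₀ :=
      hgdiffOn.differentiableAt (isOpen_Ioi.mem_nhds hy₀)
    have hT : Tendsto (slope (deriv f) y₀) (nhdsWithin y₀ {y₀}ᶜ) (nhds (deriv (deriv f) y₀)) :=
      hasDerivAt_iff_tendsto_slope.mp hgdiff.hasDerivAt
    have hev : ∀ᶠ z in nhdsWithin y₀ {y₀}ᶜ, 0 < slope (deriv f) y₀ z :=
      hT.eventually (lt_mem_nhds hA)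
    rw [eventually_nhdsWithin_iff] at hev
    obtain ⟨ε, hε, hP⟩ := Metric.eventually_nhds_iff.mp (hev.and (isOpen_Ioi.eventually_mem hy₀))
    set z₁ := y₀ + ε / 2 with hz₁def
    have hy₀z₁ : y₀ < z₁ := by simp [hz₁def]; linarith
    have hderivpos : ∀ z ∈ interior (Set.Icc y₀ z₁), 0 < deriv f z := by
      rw [interior_Icc]
      intro z hz
      have hd : dist z y₀ < ε := by
        rw [Real.dist_eq, abs_of_pos (sub_pos.mpr hz.1)]
        have := hz.2
        simp only [hz₁def] at this
        linarith
      have hslope := (hP hd).1 (ne_of_gt hz.1)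
      rw [slope_def_field, hderiv0, sub_zero] at hslope
      have hzy : 0 < z - y₀ := sub_pos.mpr hz.1
      have := mul_pos hslope hzy
      rwa [div_mul_cancel₀ _ (ne_of_gt hzy)] at this
    have hcont : ContinuousOn f (Set.Icc y₀ z₁) :=
      hf.continuousOn.mono (fun z hz => le_trans (le_of_lt hy₀) hz.1)
    have hmono := strictMonoOn_of_deriv_pos (convex_Icc y₀ z₁) hcont hderivpos
    have hlt : f y₀ < f z₁ := hmono (Set.left_mem_Icc.mpr hy₀z₁.le)
      (Set.right_mem_Icc.mpr hy₀z₁.le) hy₀z₁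
    have := (hb z₁ (le_of_lt (hy₀.trans hy₀z₁))).2
    rw [hfy₀] at hlt
    linarith
  -- integral bound
  have hS0 : 0 ≤ ∫ η in Set.Ioi (0:ℝ), Ek (y₀ - η) :=
    setIntegral_nonneg measurableSet_Ioi (fun η _ => ek_nonneg _)
  have hSlt : ∫ η in Set.Ioi (0:ℝ), Ek (y₀ - η) < 1 := ek_shift_lt_one hy₀
  have haesm_f4 : AEStronglyMeasurable (fun η => Ek (y₀ - η) * f η ^ 4)
      (volume.restrict (Set.Ioi 0)) := by
    refine AEStronglyMeasurable.mul ((ek_comp_integrable y₀).aestronglyMeasurable.restrict) ?_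
    have hfc : AEStronglyMeasurable f (volume.restrict (Set.Ioi (0:ℝ))) :=
      (hf.continuousOn.mono Set.Ioi_subset_Ici_self).aestronglyMeasurable measurableSet_Ioi
    exact (hfc.aemeasurable.pow_const 4).aestronglyMeasurable
  have hint_dom : IntegrableOn (fun η => Ek (y₀ - η) * T_M ^ 4) (Set.Ioi 0) :=
    ((ek_comp_integrable y₀).integrableOn).mul_const _
  have hI_int : IntegrableOn (fun η => Ek (y₀ - η) * f η ^ 4) (Set.Ioi 0) := by
    refine Integrable.mono' hint_dom haesm_f4 ?_
    filter_upwards [ae_restrict_mem measurableSet_Ioi] with η hη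
    have h1 : (0:ℝ) ≤ f η := (hb η (Set.mem_Ici.mpr (le_of_lt (Set.mem_Ioi.mp hη)))).1
    have h2 : f η ≤ T_M := (hb η (Set.mem_Ici.mpr (le_of_lt (Set.mem_Ioi.mp hη)))).2
    rw [Real.norm_eq_abs, abs_of_nonneg (mul_nonneg (ek_nonneg _) (by positivity))]
    exact mul_le_mul_of_nonneg_left (pow_le_pow_left₀ h1 h2 4) (ek_nonneg _)
  have hI_le : (∫ η in Set.Ioi (0:ℝ), Ek (y₀ - η) * f η ^ 4) ≤
      (∫ η in Set.Ioi (0:ℝ), Ek (y₀ - η)) * T_M ^ 4 := by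
    rw [← MeasureTheory.integral_mul_const]
    refine setIntegral_mono_on hI_int hint_dom measurableSet_Ioi ?_
    intro η hη
    have h1 : (0:ℝ) ≤ f η := (hb η (Set.mem_Ici.mpr (le_of_lt (Set.mem_Ioi.mp hη)))).1
    have h2 : f η ≤ T_M := (hb η (Set.mem_Ici.mpr (le_of_lt (Set.mem_Ioi.mp hη)))).2
    exact mul_le_mul_of_nonneg_left (pow_le_pow_left₀ h1 h2 4) (ek_nonneg _)
  have he := heq y₀ hy₀
  rw [hderiv0, hfy₀] at he
  nlinarith [pow_pos hTM 4, hsecond, hI_le, hSlt, hS0, he]
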